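/- Fix δ ∈ (0, 1). For each d, let (e_1, …, e_d) be the standard basis of ℝ^d, let n = d + ⌊δd⌋, and let (x_1, …, x_n) = (e_1, …, e_d, e_1, …, e_{⌊δd⌋}) be points on S^{d−1}. Then: (i) this configuration satisfies the Diaconis–Freedman conditions, i.e. all |x_j|² = 1, and for every ε > 0 the number of ordered pairs j ≠ k with |⟨x_j, x_k⟩| > ε is o(n²) as d → ∞; but (ii) the conclusion of the main theorem fails: there exist a ∈ ℝ and a bounded Borel set I ⊂ ℝ such that N_I^{(d)} = #{ j : n(⟨x_j, √d·U⟩ − a) ∈ I }, with U uniform on S^{d−1}, does not converge in distribution to the Poisson distribution with parameter φ(a)·mes(I). -/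

import Mathlib

open MeasureTheory Metric Filter Classical
open scoped RealInnerProductSpace ENNReal Topology Pointwise

/-- The uniform (normalized surface) probability measure on the unit sphere
`S^{d-1} ⊂ ℝ^d`. -/
noncomputable def sphereUniform (d : ℕ) :
    Measure (sphere (0 : EuclideanSpace ℝ (Fin d)) 1) :=
  ((volume : Measure (EuclideanSpace ℝ (Fin d))).toSphere Set.univ)⁻¹ •
    (volume : Measure (EuclideanSpace ℝ (Fin d))).toSphere

/-- The configuration `(x_1, …, x_n) = (e_1, …, e_d, e_1, …, e_{⌊δd⌋})` of
`n = d + ⌊δd⌋` points on `S^{d-1}` (standard basis vectors with the first `⌊δd⌋`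
of them repeated). Since `⌊δd⌋ ≤ d` for `δ < 1`, for `j ≥ d` the index `j % d`
equals `j - d`, so this is exactly the claimed configuration. -/
noncomputable def repeatedBasisConfig (δ : ℝ) (d : ℕ)
    (j : Fin (d + ⌊δ * d⌋₊)) : EuclideanSpace ℝ (Fin d) :=
  if hd : 0 < d then EuclideanSpace.single ⟨(j : ℕ) % d, Nat.mod_lt _ hd⟩ 1 else 0

noncomputable def sphMap {d : ℕ} (L : EuclideanSpace ℝ (Fin d) ≃ₗᵢ[ℝ] EuclideanSpace ℝ (Fin d))
    (u : sphere (0 : EuclideanSpace ℝ (Fin d)) 1) : sphere (0 : EuclideanSpace ℝ (Fin d)) 1 :=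
  ⟨L u, by
    have := u.2
    simp only [mem_sphere_iff_norm, sub_zero] at this ⊢
    rw [L.norm_map]; exact this⟩

lemma sphMap_continuous {d : ℕ} (L : EuclideanSpace ℝ (Fin d) ≃ₗᵢ[ℝ] EuclideanSpace ℝ (Fin d)) :
    Continuous (sphMap L) :=
  Continuous.subtype_mk (L.continuous.comp continuous_subtype_val) _

def hitPred (δ : ℝ) (I : Set ℝ) (d : ℕ) (r : Fin d)
    (u : sphere (0 : EuclideanSpace ℝ (Fin d)) 1) : Prop :=
  ((d + ⌊δ * d⌋₊ : ℕ) : ℝ) * (Real.sqrt d * (u : EuclideanSpace ℝ (Fin d)) r - 0) ∈ I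

noncomputable def hitSet (δ : ℝ) (I : Set ℝ) (d : ℕ)
    (u : sphere (0 : EuclideanSpace ℝ (Fin d)) 1) : Finset (Fin d) :=
  Finset.univ.filter (fun r => hitPred δ I d r u)

lemma toSphere_preimage (L : EuclideanSpace ℝ (Fin d) ≃ₗᵢ[ℝ] EuclideanSpace ℝ (Fin d))
    {s : Set (sphere (0 : EuclideanSpace ℝ (Fin d)) 1)} (hs : MeasurableSet s) :
    (volume : Measure (EuclideanSpace ℝ (Fin d))).toSphere (sphMap L ⁻¹' s)
      = (volume : Measure (EuclideanSpace ℝ (Fin d))).toSphere s := by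
  rw [(volume : Measure (EuclideanSpace ℝ (Fin d))).toSphere_apply' ((sphMap_continuous L).measurable hs),
    (volume : Measure (EuclideanSpace ℝ (Fin d))).toSphere_apply' hs]
  have h1 : ((↑) '' (sphMap L ⁻¹' s) : Set (EuclideanSpace ℝ (Fin d))) = ⇑L ⁻¹' ((↑) '' s) := by
    ext x
    constructor
    · rintro ⟨u, hu, rfl⟩
      exact ⟨sphMap L u, hu, rfl⟩
    · rintro ⟨v, hv, hvx⟩
      have hx : x ∈ sphere (0 : EuclideanSpace ℝ (Fin d)) 1 := by
        have : ‖(v : EuclideanSpace ℝ (Fin d))‖ = 1 := by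
          have := v.2; simpa [mem_sphere_iff_norm] using this
        rw [hvx] at this
        rw [L.norm_map] at this
        simpa [mem_sphere_iff_norm]
      refine ⟨⟨x, hx⟩, ?_, rfl⟩
      show sphMap L ⟨x, hx⟩ ∈ s
      have : sphMap L ⟨x, hx⟩ = v := Subtype.ext hvx.symm
      rwa [this]
  rw [h1]
  have h2 : (Set.Ioo (0:ℝ) 1 • (⇑L ⁻¹' ((↑) '' s)) : Set (EuclideanSpace ℝ (Fin d)))
      = ⇑L ⁻¹' (Set.Ioo (0:ℝ) 1 • ((↑) '' s)) := by
    ext x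
    constructor
    · rintro ⟨c, hc, y, hy, rfl⟩
      exact ⟨c, hc, L y, hy, (L.map_smul c y).symm⟩
    · rintro ⟨c, hc, z, hz, hx⟩
      refine ⟨c, hc, L.symm z, by simpa using hz, ?_⟩
      apply L.injective
      rw [L.map_smul]
      simp [← hx]
  rw [h2]
  have e : EuclideanSpace ℝ (Fin d) ≃ᵐ EuclideanSpace ℝ (Fin d) :=
    L.toHomeomorph.toMeasurableEquiv
  have key : ∀ Z : Set (EuclideanSpace ℝ (Fin d)), volume (⇑L ⁻¹' Z) = volume Z := by
    intro Z
    have hcoe : ⇑(L.toHomeomorph.toMeasurableEquiv) = ⇑L := rfl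
    have h := MeasurableEquiv.map_apply (μ := (volume : Measure (EuclideanSpace ℝ (Fin d))))
      (L.toHomeomorph.toMeasurableEquiv) Z
    rw [hcoe] at h
    rw [← h, L.measurePreserving.map_eq]
  rw [key]

lemma sphereUniform_preimage {d : ℕ}
    (L : EuclideanSpace ℝ (Fin d) ≃ₗᵢ[ℝ] EuclideanSpace ℝ (Fin d))
    {s : Set (sphere (0 : EuclideanSpace ℝ (Fin d)) 1)} (hs : MeasurableSet s) :
    sphereUniform d (sphMap L ⁻¹' s) = sphereUniform d s := by
  simp only [sphereUniform, Measure.smul_apply, smul_eq_mul, toSphere_preimage L hs]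

lemma sphereUniform_le_one {d : ℕ} (A : Set (sphere (0 : EuclideanSpace ℝ (Fin d)) 1)) :
    sphereUniform d A ≤ 1 := by
  set ν := (volume : Measure (EuclideanSpace ℝ (Fin d))).toSphere
  have hA : ν A ≤ ν Set.univ := measure_mono (Set.subset_univ A)
  rcases eq_or_ne (ν Set.univ) 0 with h0 | h0
  · have : ν A = 0 := le_antisymm (h0 ▸ hA) zero_le
    have h2 : sphereUniform d A = (ν Set.univ)⁻¹ * ν A := by
      simp only [sphereUniform, Measure.smul_apply, smul_eq_mul]; rfl
    rw [h2, this, mul_zero]; exact zero_le_one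
  · have hfin : ν Set.univ ≠ ∞ := measure_ne_top ν Set.univ
    calc sphereUniform d A = (ν Set.univ)⁻¹ * ν A := by
          simp only [sphereUniform, Measure.smul_apply, smul_eq_mul]; rfl
      _ ≤ (ν Set.univ)⁻¹ * ν Set.univ := by
          exact mul_le_mul_right hA _
      _ = 1 := ENNReal.inv_mul_cancel h0 hfin

lemma sphereUniform_ne_top {d : ℕ} (A : Set (sphere (0 : EuclideanSpace ℝ (Fin d)) 1)) :
    sphereUniform d A ≠ ∞ :=
  fun h => by simpa [h] using sphereUniform_le_one A

lemma measurable_hitPred (δ : ℝ) {I : Set ℝ} (hI : MeasurableSet I) (d : ℕ) (r : Fin d) :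
    MeasurableSet {u : sphere (0 : EuclideanSpace ℝ (Fin d)) 1 | hitPred δ I d r u} := by
  have hf : Measurable (fun u : sphere (0 : EuclideanSpace ℝ (Fin d)) 1 =>
      ((d + ⌊δ * d⌋₊ : ℕ) : ℝ) * (Real.sqrt d * (u : EuclideanSpace ℝ (Fin d)) r - 0)) := by
    have hcoord : Measurable (fun u : sphere (0 : EuclideanSpace ℝ (Fin d)) 1 =>
        (u : EuclideanSpace ℝ (Fin d)) r) :=
      (measurable_pi_apply r).comp ((WithLp.measurable_ofLp 2 _).comp measurable_subtype_coe)
    exact ((hcoord.const_mul (Real.sqrt d)).sub measurable_const).const_mul _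
  exact hf hI

lemma measurable_hitSet_eq (δ : ℝ) {I : Set ℝ} (hI : MeasurableSet I) (d : ℕ)
    (S : Finset (Fin d)) :
    MeasurableSet {u : sphere (0 : EuclideanSpace ℝ (Fin d)) 1 | hitSet δ I d u = S} := by
  have : {u : sphere (0 : EuclideanSpace ℝ (Fin d)) 1 | hitSet δ I d u = S}
      = ⋂ r : Fin d, (if r ∈ S then {u | hitPred δ I d r u} else {u | hitPred δ I d r u}ᶜ) := by
    ext u
    simp only [Set.mem_setOf_eq, Set.mem_iInter]
    constructor
    · intro h r
      by_cases hr : r ∈ S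
      · simp only [if_pos hr, Set.mem_setOf_eq]
        have : r ∈ hitSet δ I d u := h ▸ hr
        simpa [hitSet] using this
      · simp only [if_neg hr, Set.mem_compl_iff, Set.mem_setOf_eq]
        intro hc
        exact hr (h ▸ (by simpa [hitSet] using hc : r ∈ hitSet δ I d u))
    · intro h
      ext r
      have := h r
      by_cases hr : r ∈ S
      · simp only [if_pos hr, Set.mem_setOf_eq] at this
        simp [hitSet, this, hr]
      · simp only [if_neg hr, Set.mem_compl_iff, Set.mem_setOf_eq] at this
        simp [hitSet, this, hr]
  rw [this]
  exact MeasurableSet.iInter (fun r => by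
    by_cases hr : r ∈ S
    · simpa [if_pos hr] using measurable_hitPred δ hI d r
    · simpa [if_neg hr] using (measurable_hitPred δ hI d r).compl)

lemma card_filter_lt_fin (d m : ℕ) (hm : m ≤ d) :
    ((Finset.univ : Finset (Fin d)).filter (fun r : Fin d => r.1 < m)).card = m := by
  have := Finset.card_bij' (s := (Finset.univ : Finset (Fin d)).filter (fun r : Fin d => r.1 < m))
    (t := (Finset.univ : Finset (Fin m)))
    (i := fun r hr => (⟨r.1, (Finset.mem_filter.mp hr).2⟩ : Fin m))
    (j := fun i _ => (⟨i.1, lt_of_lt_of_le i.2 hm⟩ : Fin d))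
    (fun a ha => Finset.mem_univ _)
    (fun b hb => Finset.mem_filter.mpr ⟨Finset.mem_univ _, b.2⟩)
    (fun a ha => rfl) (fun b hb => rfl)
  simpa using this

lemma inner_config (δ : ℝ) (d : ℕ) (hd : 0 < d) (j : Fin (d + ⌊δ * d⌋₊))
    (v : EuclideanSpace ℝ (Fin d)) :
    ⟪repeatedBasisConfig δ d j, v⟫ = v ⟨(j : ℕ) % d, Nat.mod_lt _ hd⟩ := by
  rw [repeatedBasisConfig, dif_pos hd]
  rw [EuclideanSpace.inner_single_left]
  simp

lemma count_decomp (δ : ℝ) (hδ1 : δ ≤ 1) (I : Set ℝ) (d : ℕ) (hd : 0 < d)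
    (u : sphere (0 : EuclideanSpace ℝ (Fin d)) 1) :
    (Finset.univ.filter (fun j : Fin (d + ⌊δ * d⌋₊) =>
        ((d + ⌊δ * d⌋₊ : ℕ) : ℝ) *
          (⟪repeatedBasisConfig δ d j,
              Real.sqrt d • (u : EuclideanSpace ℝ (Fin d))⟫ - 0) ∈ I)).card
      = (hitSet δ I d u).card
        + ((hitSet δ I d u).filter (fun r : Fin d => r.1 < ⌊δ * d⌋₊)).card := by
  set m := ⌊δ * d⌋₊ with hm
  have hmd : m ≤ d := by
    have h1 : δ * d ≤ (d : ℝ) := by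
      nlinarith [Nat.cast_nonneg (α := ℝ) d]
    calc m ≤ ⌊(d : ℝ)⌋₊ := Nat.floor_mono h1
      _ = d := Nat.floor_natCast d
  have hQ : ∀ j : Fin (d + m),
      (((d + m : ℕ) : ℝ) * (⟪repeatedBasisConfig δ d j,
          Real.sqrt d • (u : EuclideanSpace ℝ (Fin d))⟫ - 0) ∈ I)
        = hitPred δ I d ⟨(j : ℕ) % d, Nat.mod_lt _ hd⟩ u := by
    intro j
    rw [inner_config δ d hd j]
    have : (Real.sqrt d • (u : EuclideanSpace ℝ (Fin d))) ⟨(j : ℕ) % d, Nat.mod_lt _ hd⟩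
        = Real.sqrt d * (u : EuclideanSpace ℝ (Fin d)) ⟨(j : ℕ) % d, Nat.mod_lt _ hd⟩ := rfl
    rw [this, hitPred]
  -- card = sum of indicators
  rw [Finset.card_filter]
  have hsum := Fin.sum_univ_add (a := d) (b := m)
    (f := fun j => if (((d + m : ℕ) : ℝ) * (⟪repeatedBasisConfig δ d j,
          Real.sqrt d • (u : EuclideanSpace ℝ (Fin d))⟫ - 0) ∈ I) then 1 else 0)
  rw [hsum]
  congr 1
  · -- first block
    rw [hitSet, Finset.card_filter]
    apply Finset.sum_congr rfl
    intro i _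
    rw [hQ]
    congr 1
    · apply propext
      constructor
      · intro h
        convert h using 2
        simp [Nat.mod_eq_of_lt i.isLt]
      · intro h
        convert h using 2
        simp [Nat.mod_eq_of_lt i.isLt]
  · -- second block
    have hident : ∀ i : Fin m,
        (⟨((Fin.natAdd d i : Fin (d + m)) : ℕ) % d, Nat.mod_lt _ hd⟩ : Fin d)
          = ⟨(i : ℕ), lt_of_lt_of_le i.isLt hmd⟩ := by
      intro i
      apply Fin.ext
      show ((d + (i : ℕ)) % d) = (i : ℕ)
      rw [Nat.add_mod_left]
      exact Nat.mod_eq_of_lt (lt_of_lt_of_le i.isLt hmd)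
    have step1 : ∀ i : Fin m,
        (if (((d + m : ℕ) : ℝ) * (⟪repeatedBasisConfig δ d (Fin.natAdd d i),
            Real.sqrt d • (u : EuclideanSpace ℝ (Fin d))⟫ - 0) ∈ I) then 1 else 0)
          = (if hitPred δ I d ⟨(i : ℕ), lt_of_lt_of_le i.isLt hmd⟩ u then 1 else 0) := by
      intro i
      rw [hQ (Fin.natAdd d i), hident i]
    rw [Finset.sum_congr rfl (fun i _ => step1 i), hitSet, Finset.filter_filter,
      Finset.card_filter]
    have hsplit : ∀ r : Fin d, (if (hitPred δ I d r u ∧ r.1 < m) then (1:ℕ) else 0)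
        = if r.1 < m then (if hitPred δ I d r u then 1 else 0) else 0 := by
      intro r; by_cases h1 : r.1 < m <;> by_cases h2 : hitPred δ I d r u <;> simp [h1, h2]
    have hbij : (∑ i : Fin m, if hitPred δ I d ⟨(i:ℕ), lt_of_lt_of_le i.isLt hmd⟩ u then (1:ℕ) else 0)
        = ∑ r ∈ Finset.univ.filter (fun r : Fin d => r.1 < m),
            (if hitPred δ I d r u then (1:ℕ) else 0) :=
      Finset.sum_bij'
        (fun (i : Fin m) (_ : i ∈ Finset.univ) => (⟨i.1, lt_of_lt_of_le i.isLt hmd⟩ : Fin d))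
        (fun (r : Fin d) hr => (⟨r.1, (Finset.mem_filter.mp hr).2⟩ : Fin m))
        (fun a ha => Finset.mem_filter.mpr ⟨Finset.mem_univ _, a.isLt⟩)
        (fun b hb => Finset.mem_univ _)
        (fun a ha => rfl) (fun b hb => rfl) (fun a ha => rfl)
    rw [hbij, Finset.sum_filter]
    exact Finset.sum_congr rfl (fun r _ => (hsplit r).symm)


lemma hitSet_singleton_swap (δ : ℝ) {I : Set ℝ} (hI : MeasurableSet I) (d : ℕ)
    (r r' : Fin d) :
    sphereUniform d {u | hitSet δ I d u = {r}}
      = sphereUniform d {u | hitSet δ I d u = {r'}} := by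
  classical
  set e := Equiv.swap r r' with he
  set L := LinearIsometryEquiv.piLpCongrLeft 2 ℝ ℝ e with hL
  have happly : ∀ (v : EuclideanSpace ℝ (Fin d)) (i : Fin d), (L v) i = v (e.symm i) := by
    intro v i
    rw [hL, LinearIsometryEquiv.piLpCongrLeft_apply]
    rfl
  have hmem : ∀ (u : sphere (0 : EuclideanSpace ℝ (Fin d)) 1) (i : Fin d),
      (i ∈ hitSet δ I d (sphMap L u)) ↔ (e.symm i ∈ hitSet δ I d u) := by
    intro u i
    simp only [hitSet, Finset.mem_filter, Finset.mem_univ, true_and]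
    unfold hitPred
    have hc : ((sphMap L u : EuclideanSpace ℝ (Fin d)) i)
        = (u : EuclideanSpace ℝ (Fin d)) (e.symm i) := by
      have : (sphMap L u : EuclideanSpace ℝ (Fin d)) = L (u : EuclideanSpace ℝ (Fin d)) := rfl
      rw [this, happly]
    rw [hc]
  have hpre : sphMap L ⁻¹' {u | hitSet δ I d u = {r'}} = {u | hitSet δ I d u = {r}} := by
    ext u
    simp only [Set.mem_preimage, Set.mem_setOf_eq]
    constructor
    · intro h
      ext j
      rw [Finset.mem_singleton]
      have h1 : j ∈ hitSet δ I d u ↔ e j ∈ hitSet δ I d (sphMap L u) := by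
        rw [hmem u (e j), Equiv.symm_apply_apply]
      rw [h1, h, Finset.mem_singleton]
      constructor
      · intro hj
        have : j = e.symm r' := by rw [← hj, Equiv.symm_apply_apply]
        rw [this, he]
        simp
      · intro hj
        rw [hj, he]
        simp
    · intro h
      ext i
      rw [Finset.mem_singleton, hmem u i, h, Finset.mem_singleton]
      constructor
      · intro hi
        have : i = e r := by rw [← hi, Equiv.apply_symm_apply]
        rw [this, he]
        simp
      · intro hi
        rw [hi, he]
        simp
  rw [← hpre, sphereUniform_preimage L (measurable_hitSet_eq δ hI d {r'})]


lemma nat_mod_unique {d m j k k' : ℕ} (hd : 0 < d)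
    (hj : j < d + m) (hk : k < d + m) (hk' : k' < d + m) (hm : m ≤ d)
    (h1 : k % d = j % d) (h2 : k' % d = j % d) (hkj : k ≠ j) (hk'j : k' ≠ j) : k = k' := by
  have ej := Nat.div_add_mod j d
  have ek := Nat.div_add_mod k d
  have ek' := Nat.div_add_mod k' d
  have hqj : j / d < 2 := by rw [Nat.div_lt_iff_lt_mul hd]; omega
  have hqk : k / d < 2 := by rw [Nat.div_lt_iff_lt_mul hd]; omega
  have hqk' : k' / d < 2 := by rw [Nat.div_lt_iff_lt_mul hd]; omega
  set qj := j / d with hqj'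
  set qk := k / d with hqk'2
  set qk' := k' / d with hqk'3
  interval_cases qj <;> interval_cases qk <;> interval_cases qk' <;> omega

lemma floor_ratio_tendsto (δ : ℝ) (hδ0 : 0 < δ) (hδ1 : δ < 1) :
    Filter.Tendsto (fun d : ℕ => ((⌊δ * d⌋₊ : ℝ) / d)) Filter.atTop (nhds δ) := by
  apply tendsto_of_tendsto_of_tendsto_of_le_of_le'
    (g := fun d : ℕ => δ - 1 / (d : ℝ)) (h := fun _ : ℕ => δ)
  · have h0 : Filter.Tendsto (fun d : ℕ => 1 / (d:ℝ)) Filter.atTop (nhds 0) :=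
      tendsto_one_div_atTop_nhds_zero_nat
    have := (tendsto_const_nhds (x := δ) (f := Filter.atTop (α := ℕ))).sub h0
    simpa using this
  · exact tendsto_const_nhds
  · filter_upwards [Filter.eventually_ge_atTop 1] with d hd
    have hdpos : (0:ℝ) < d := by exact_mod_cast hd
    rw [le_div_iff₀ hdpos]
    have hfl := Nat.lt_floor_add_one (δ * (d:ℝ))
    have hinv : (1/(d:ℝ))*(d:ℝ) = 1 := by field_simp
    nlinarith
  · filter_upwards [Filter.eventually_ge_atTop 1] with d hd
    have hdpos : (0:ℝ) < d := by exact_mod_cast hd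
    rw [div_le_iff₀ hdpos]
    exact Nat.floor_le (by positivity)

/-- For fixed `δ ∈ (0,1)`, the configuration `(e_1, …, e_d, e_1, …, e_{⌊δd⌋})` of
`n = d + ⌊δd⌋` points on `S^{d-1}` satisfies the Diaconis–Freedman conditions
(unit norms, and for every `ε > 0` the number of ordered pairs `j ≠ k` with
`|⟨x_j, x_k⟩| > ε` is `o(n²)`), yet the conclusion of the main theorem fails:
for some `a ∈ ℝ` and bounded Borel `I ⊆ ℝ`, the count
`N_I^{(d)} = #{j : n(⟨x_j, √d·U⟩ - a) ∈ I}` does not converge in distribution to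
`Pois(φ(a)·mes I)`. -/
theorem diaconis_freedman_not_sufficient (δ : ℝ) (hδ : δ ∈ Set.Ioo (0 : ℝ) 1) :
    (∀ d : ℕ, 0 < d → ∀ j : Fin (d + ⌊δ * d⌋₊), ‖repeatedBasisConfig δ d j‖ ^ 2 = 1) ∧
    (∀ ε : ℝ, 0 < ε →
      Tendsto (fun d : ℕ =>
          ((Finset.univ.filter
              (fun p : Fin (d + ⌊δ * d⌋₊) × Fin (d + ⌊δ * d⌋₊) =>
                p.1 ≠ p.2 ∧
                  ε < |⟪repeatedBasisConfig δ d p.1, repeatedBasisConfig δ d p.2⟫|)).card : ℝ)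
            / ((d + ⌊δ * d⌋₊ : ℕ) : ℝ) ^ 2)
        atTop (𝓝 0)) ∧
    ∃ a : ℝ, ∃ I : Set ℝ, Bornology.IsBounded I ∧ MeasurableSet I ∧
      ¬ (∀ k : ℕ,
        Tendsto (fun d : ℕ =>
            ((sphereUniform d)
              {u | (Finset.univ.filter (fun j : Fin (d + ⌊δ * d⌋₊) =>
                  ((d + ⌊δ * d⌋₊ : ℕ) : ℝ) *
                    (⟪repeatedBasisConfig δ d j,
                        Real.sqrt d • (u : EuclideanSpace ℝ (Fin d))⟫ - a)
                    ∈ I)).card = k}).toReal)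
          atTop
          (𝓝 (Real.exp (-((2 * Real.pi) ^ (-(1/2) : ℝ) * Real.exp (-a ^ 2 / 2) *
                (volume I).toReal)) *
              ((2 * Real.pi) ^ (-(1/2) : ℝ) * Real.exp (-a ^ 2 / 2) *
                (volume I).toReal) ^ k / (Nat.factorial k)))) := by
  obtain ⟨hδ0, hδ1⟩ := hδ
  refine ⟨?_, ?_, ?_⟩
  · -- Part 1: unit norms
    intro d hd j
    rw [repeatedBasisConfig, dif_pos hd]
    simp
  · -- Part 2: o(n²) pairs
    intro ε hε
    have hcard : ∀ d : ℕ, 1 ≤ d →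
        ((Finset.univ.filter
            (fun p : Fin (d + ⌊δ * d⌋₊) × Fin (d + ⌊δ * d⌋₊) =>
              p.1 ≠ p.2 ∧
                ε < |⟪repeatedBasisConfig δ d p.1, repeatedBasisConfig δ d p.2⟫|)).card
          ≤ d + ⌊δ * d⌋₊) := by
      intro d hd
      have hdpos : 0 < d := hd
      have hmd : ⌊δ * d⌋₊ ≤ d := by
        have h1 : δ * d ≤ (d : ℝ) := by nlinarith [Nat.cast_nonneg (α := ℝ) d]
        calc ⌊δ * d⌋₊ ≤ ⌊(d : ℝ)⌋₊ := Nat.floor_mono h1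
          _ = d := Nat.floor_natCast d
      have hmod : ∀ p : Fin (d + ⌊δ * d⌋₊) × Fin (d + ⌊δ * d⌋₊),
          (p.1 ≠ p.2 ∧
            ε < |⟪repeatedBasisConfig δ d p.1, repeatedBasisConfig δ d p.2⟫|) →
          (p.2 : ℕ) % d = (p.1 : ℕ) % d := by
        rintro ⟨j, k⟩ ⟨hne, hgt⟩
        by_contra hne2
        have hne3 : (⟨(j : ℕ) % d, Nat.mod_lt _ hdpos⟩ : Fin d)
            ≠ ⟨(k : ℕ) % d, Nat.mod_lt _ hdpos⟩ := by
          intro hc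
          exact hne2 (congrArg Fin.val hc).symm
        have hval : ⟪repeatedBasisConfig δ d j, repeatedBasisConfig δ d k⟫ = (0:ℝ) := by
          rw [inner_config δ d hdpos j, repeatedBasisConfig, dif_pos hdpos,
            EuclideanSpace.single_apply, if_neg hne3]
        rw [hval] at hgt
        simp only [abs_zero] at hgt
        linarith
      refine le_trans
        (Finset.card_le_card_of_injOn Prod.fst (fun p _ => Finset.mem_univ _) ?_) (by simp)
      intro p hp q hq hpq
      simp only [Finset.coe_filter, Set.mem_setOf_eq, Finset.mem_univ, true_and] at hp hq
      have h1 := hmod p hp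
      have h2 := hmod q hq
      rw [hpq] at h1
      have hval : (p.2 : ℕ) = (q.2 : ℕ) := by
        refine nat_mod_unique hdpos q.1.isLt p.2.isLt q.2.isLt hmd h1 h2 ?_ ?_
        · exact fun hc => hp.1 (hpq.trans (Fin.ext hc).symm)
        · exact fun hc => hq.1 (Fin.ext hc).symm
      exact Prod.ext hpq (Fin.ext hval)
    have gen : ∀ (C n d : ℕ), 1 ≤ d → d ≤ n → C ≤ n → (C:ℝ)/(n:ℝ)^2 ≤ 1/(d:ℝ) := by
      intro C n d h1 h2 h3
      have hd : (0:ℝ) < d := by exact_mod_cast h1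
      have hn : (0:ℝ) < n := by exact_mod_cast lt_of_lt_of_le h1 h2
      have hCn : (C:ℝ) ≤ (n:ℝ) := by exact_mod_cast h3
      have e1 : (n:ℝ)/(n:ℝ)^2 = 1/(n:ℝ) := by
        rw [pow_two]
        field_simp
      have e2 : (C:ℝ)/(n:ℝ)^2 ≤ (n:ℝ)/(n:ℝ)^2 := by gcongr
      have e3 : (1:ℝ)/(n:ℝ) ≤ 1/(d:ℝ) := by
        apply one_div_le_one_div_of_le hd
        exact_mod_cast h2
      linarith [e1 ▸ e2]
    apply squeeze_zero' (g := fun d : ℕ => 1 / (d : ℝ))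
    · filter_upwards with d
      positivity
    · filter_upwards [Filter.eventually_ge_atTop 1] with d hd
      exact gen _ _ d hd (Nat.le_add_right d _) (hcard d hd)
    · exact tendsto_one_div_atTop_nhds_zero_nat
  · -- Part 3
    refine ⟨0, Set.Icc 0 δ, isBounded_Icc 0 δ, measurableSet_Icc, ?_⟩
    intro hP
    obtain ⟨II, hII⟩ : ∃ s : Set ℝ, s = Set.Icc (0:ℝ) δ := ⟨_, rfl⟩
    rw [← hII] at hP
    have hIImeas : MeasurableSet II := by rw [hII]; exact measurableSet_Icc
    have hc_pos : (0:ℝ) < (2 * Real.pi) ^ (-(1/2) : ℝ) := Real.rpow_pos_of_pos (by positivity) _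
    have hc_lt : (2 * Real.pi) ^ (-(1/2) : ℝ) < 1 := by
      have h2pi : (1:ℝ) < 2 * Real.pi := by nlinarith [Real.pi_gt_three]
      have := Real.rpow_lt_rpow_of_exponent_lt h2pi (show (-(1/2):ℝ) < (0:ℝ) by norm_num)
      simpa using this
    set c : ℝ := (2 * Real.pi) ^ (-(1/2) : ℝ) with hc
    have hvol : (volume (II)).toReal = δ := by
      rw [hII, Real.volume_Icc, ENNReal.toReal_ofReal (by linarith)]
      ring
    have hΛ : c * Real.exp (-(0:ℝ) ^ 2 / 2) * (volume (II)).toReal = c * δ := by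
      rw [hvol]
      norm_num
    have h1 := hP 1
    have h2 := hP 2
    rw [hΛ] at h1 h2
    -- the ratio sequence
    have hfl := floor_ratio_tendsto δ hδ0 hδ1
    have hden : Tendsto (fun d : ℕ => 1 - (⌊δ * d⌋₊:ℝ)/d) atTop (𝓝 (1 - δ)) :=
      tendsto_const_nhds.sub hfl
    have hq := hfl.div hden (by intro h; linarith [h] : (1:ℝ) - δ ≠ 0)
    have hratio : Tendsto (fun d : ℕ => (⌊δ * d⌋₊:ℝ)/((d:ℝ) - (⌊δ * d⌋₊:ℝ))) atTop
        (𝓝 (δ/(1-δ))) := by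
      refine Tendsto.congr' ?_ hq
      filter_upwards [Filter.eventually_ge_atTop 1] with d hd
      have hdpos : (0:ℝ) < d := by exact_mod_cast hd
      have hmlt : (⌊δ * d⌋₊:ℝ) < (d:ℝ) := by
        calc (⌊δ * d⌋₊:ℝ) ≤ δ * d := Nat.floor_le (by positivity)
          _ < d := by nlinarith
      have hne1 : (d:ℝ) ≠ 0 := ne_of_gt hdpos
      have hne2 : (d:ℝ) - (⌊δ * d⌋₊:ℝ) ≠ 0 := ne_of_gt (by linarith)
      rw [Pi.div_apply]
      field_simp
    -- the eventual inequality
    have hle := le_of_tendsto_of_tendsto (hratio.mul h1) h2 ?_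
    swap
    · filter_upwards [Filter.eventually_ge_atTop 1] with d hd
      have hdpos : 0 < d := hd
      have hmd : ⌊δ * d⌋₊ ≤ d := by
        have hx : δ * d ≤ (d : ℝ) := by nlinarith [Nat.cast_nonneg (α := ℝ) d]
        calc ⌊δ * d⌋₊ ≤ ⌊(d : ℝ)⌋₊ := Nat.floor_mono hx
          _ = d := Nat.floor_natCast d
      have hmlt : ⌊δ * d⌋₊ < d := by
        rw [Nat.floor_lt (by positivity)]
        have hx : (1:ℝ) ≤ (d:ℝ) := by exact_mod_cast hd
        nlinarith
      set r0 : Fin d := ⟨0, hdpos⟩ with hr0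
      set pE := sphereUniform d {u | hitSet δ (II) d u = {r0}} with hpE
      have hpE_ne : pE ≠ ∞ := sphereUniform_ne_top _
      -- disjointness of singleton-hit events
      have hdisj : ∀ (T : Finset (Fin d)), (Set.PairwiseDisjoint (T : Set (Fin d))
          (fun r : Fin d => {u : sphere (0 : EuclideanSpace ℝ (Fin d)) 1 |
            hitSet δ (II) d u = {r}})) := by
        intro T r _ r' _ hne
        simp only [Function.onFun]
        rw [Set.disjoint_left]
        intro u hu hu'
        rw [Set.mem_setOf_eq] at hu hu'
        exact hne (Finset.singleton_injective (hu.symm.trans hu'))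
      -- event {N = 1}
      have hev1 : {u : sphere (0 : EuclideanSpace ℝ (Fin d)) 1 |
          (Finset.univ.filter (fun j : Fin (d + ⌊δ * d⌋₊) =>
            ((d + ⌊δ * d⌋₊ : ℕ) : ℝ) * (⟪repeatedBasisConfig δ d j,
              Real.sqrt d • (u : EuclideanSpace ℝ (Fin d))⟫ - 0) ∈ II)).card = 1}
          = ⋃ r ∈ Finset.univ.filter (fun r : Fin d => ¬ r.1 < ⌊δ * d⌋₊),
              {u | hitSet δ (II) d u = {r}} := by
        ext u
        rw [Set.mem_setOf_eq, count_decomp δ (le_of_lt hδ1) (II) d hdpos u]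
        constructor
        · intro h
          have hfle := Finset.card_filter_le (hitSet δ (II) d u)
            (fun r : Fin d => r.1 < ⌊δ * d⌋₊)
          have hc1 : (hitSet δ (II) d u).card = 1 := by omega
          have hc0 : ((hitSet δ (II) d u).filter
              (fun r : Fin d => r.1 < ⌊δ * d⌋₊)).card = 0 := by omega
          obtain ⟨r, hr⟩ := Finset.card_eq_one.mp hc1
          have hnr : ¬ r.1 < ⌊δ * d⌋₊ := by
            intro hrm
            rw [hr, Finset.filter_singleton, if_pos hrm, Finset.card_singleton] at hc0
            exact one_ne_zero hc0
          simp only [Set.mem_iUnion]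
          exact ⟨r, by
            simp only [Finset.mem_filter, Finset.mem_univ, true_and]
            exact hnr, hr⟩
        · intro h
          simp only [Set.mem_iUnion] at h
          obtain ⟨r, hrmem, hru⟩ := h
          have hnr : ¬ r.1 < ⌊δ * d⌋₊ := by
            have := Finset.mem_filter.mp hrmem
            exact this.2
          rw [hru, Finset.card_singleton, Finset.filter_singleton, if_neg hnr,
            Finset.card_empty]
        -- cardinality of the index set
      have hcard_ge : (Finset.univ.filter (fun r : Fin d => ¬ r.1 < ⌊δ * d⌋₊)).card = d - ⌊δ * d⌋₊ := by
        have h1' := Finset.card_filter_add_card_filter_not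
          (s := (Finset.univ : Finset (Fin d))) (p := fun r : Fin d => r.1 < ⌊δ * d⌋₊)
        have h2' := card_filter_lt_fin d ⌊δ * d⌋₊ hmd
        simp only [Finset.card_univ, Fintype.card_fin] at h1'
        omega
      have hmeas1 : sphereUniform d {u : sphere (0 : EuclideanSpace ℝ (Fin d)) 1 |
          (Finset.univ.filter (fun j : Fin (d + ⌊δ * d⌋₊) =>
            ((d + ⌊δ * d⌋₊ : ℕ) : ℝ) * (⟪repeatedBasisConfig δ d j,
              Real.sqrt d • (u : EuclideanSpace ℝ (Fin d))⟫ - 0) ∈ II)).card = 1}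
          = ((d - ⌊δ * d⌋₊ : ℕ) : ℝ≥0∞) * pE := by
        rw [hev1, measure_biUnion_finset (hdisj _)
          (fun r _ => measurable_hitSet_eq δ hIImeas d {r})]
        rw [Finset.sum_congr rfl
          (fun r _ => hitSet_singleton_swap δ hIImeas d r r0)]
        rw [Finset.sum_const, hcard_ge, nsmul_eq_mul]
      -- event {N = 2} lower bound
      have hsub2 : ∀ r : Fin d, r.1 < ⌊δ * d⌋₊ →
          {u : sphere (0 : EuclideanSpace ℝ (Fin d)) 1 | hitSet δ (II) d u = {r}}
          ⊆ {u | (Finset.univ.filter (fun j : Fin (d + ⌊δ * d⌋₊) =>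
              ((d + ⌊δ * d⌋₊ : ℕ) : ℝ) * (⟪repeatedBasisConfig δ d j,
                Real.sqrt d • (u : EuclideanSpace ℝ (Fin d))⟫ - 0) ∈ II)).card = 2} := by
        intro r hrm u hu
        rw [Set.mem_setOf_eq] at hu ⊢
        rw [count_decomp δ (le_of_lt hδ1) (II) d hdpos u, hu,
          Finset.filter_singleton, if_pos hrm, Finset.card_singleton]
      have hmeas2 : ((⌊δ * d⌋₊ : ℕ) : ℝ≥0∞) * pE ≤
          sphereUniform d {u : sphere (0 : EuclideanSpace ℝ (Fin d)) 1 |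
            (Finset.univ.filter (fun j : Fin (d + ⌊δ * d⌋₊) =>
              ((d + ⌊δ * d⌋₊ : ℕ) : ℝ) * (⟪repeatedBasisConfig δ d j,
                Real.sqrt d • (u : EuclideanSpace ℝ (Fin d))⟫ - 0) ∈ II)).card = 2} := by
        have hsub : (⋃ r ∈ Finset.univ.filter (fun r : Fin d => r.1 < ⌊δ * d⌋₊),
            {u : sphere (0 : EuclideanSpace ℝ (Fin d)) 1 | hitSet δ (II) d u = {r}})
            ⊆ {u | (Finset.univ.filter (fun j : Fin (d + ⌊δ * d⌋₊) =>
              ((d + ⌊δ * d⌋₊ : ℕ) : ℝ) * (⟪repeatedBasisConfig δ d j,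
                Real.sqrt d • (u : EuclideanSpace ℝ (Fin d))⟫ - 0) ∈ II)).card = 2} := by
          refine Set.iUnion₂_subset ?_
          intro r hr
          exact hsub2 r (Finset.mem_filter.mp hr).2
        calc ((⌊δ * d⌋₊ : ℕ) : ℝ≥0∞) * pE
            = ∑ r ∈ Finset.univ.filter (fun r : Fin d => r.1 < ⌊δ * d⌋₊),
                sphereUniform d {u | hitSet δ (II) d u = {r}} := by
              rw [Finset.sum_congr rfl
                (fun r _ => hitSet_singleton_swap δ hIImeas d r r0)]
              rw [Finset.sum_const, card_filter_lt_fin d ⌊δ * d⌋₊ hmd, nsmul_eq_mul]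
          _ = sphereUniform d (⋃ r ∈ Finset.univ.filter (fun r : Fin d => r.1 < ⌊δ * d⌋₊),
                {u | hitSet δ (II) d u = {r}}) :=
              (measure_biUnion_finset (hdisj _)
                (fun r _ => measurable_hitSet_eq δ hIImeas d {r})).symm
          _ ≤ _ := measure_mono hsub
      -- conclusion for this d
      have hμ2ne := sphereUniform_ne_top (d := d)
        {u : sphere (0 : EuclideanSpace ℝ (Fin d)) 1 |
          (Finset.univ.filter (fun j : Fin (d + ⌊δ * d⌋₊) =>
            ((d + ⌊δ * d⌋₊ : ℕ) : ℝ) * (⟪repeatedBasisConfig δ d j,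
              Real.sqrt d • (u : EuclideanSpace ℝ (Fin d))⟫ - 0) ∈ II)).card = 2}
      have h2ge : (⌊δ * d⌋₊:ℝ) * pE.toReal ≤
          (sphereUniform d {u : sphere (0 : EuclideanSpace ℝ (Fin d)) 1 |
            (Finset.univ.filter (fun j : Fin (d + ⌊δ * d⌋₊) =>
              ((d + ⌊δ * d⌋₊ : ℕ) : ℝ) * (⟪repeatedBasisConfig δ d j,
                Real.sqrt d • (u : EuclideanSpace ℝ (Fin d))⟫ - 0) ∈ II)).card
              = 2}).toReal := by
        have hmono := ENNReal.toReal_mono hμ2ne hmeas2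
        rwa [ENNReal.toReal_mul, ENNReal.toReal_natCast] at hmono
      show (⌊δ * (d:ℝ)⌋₊:ℝ)/((d:ℝ) - (⌊δ * (d:ℝ)⌋₊:ℝ)) *
          (sphereUniform d _).toReal ≤ (sphereUniform d _).toReal
      rw [hmeas1, ENNReal.toReal_mul, ENNReal.toReal_natCast]
      have hcast : ((d - ⌊δ * d⌋₊ : ℕ):ℝ) = (d:ℝ) - (⌊δ * d⌋₊:ℝ) := by
        rw [Nat.cast_sub (le_of_lt hmlt)]
      rw [hcast]
      have hdm : (0:ℝ) < (d:ℝ) - (⌊δ * d⌋₊:ℝ) := by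
        have hx : (⌊δ * d⌋₊:ℝ) < (d:ℝ) := by exact_mod_cast hmlt
        linarith
      have hswap : ((⌊δ * d⌋₊:ℝ)/((d:ℝ)-(⌊δ * d⌋₊:ℝ))) * (((d:ℝ)-(⌊δ * d⌋₊:ℝ)) * pE.toReal)
          = (⌊δ * d⌋₊:ℝ) * pE.toReal := by
        field_simp
      rw [hswap]
      exact h2ge
    -- final numeric contradiction
    have hfac1 : ((Nat.factorial 1 : ℕ):ℝ) = 1 := by norm_num [Nat.factorial]
    have hfac2 : ((Nat.factorial 2 : ℕ):ℝ) = 2 := by norm_num [Nat.factorial]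
    rw [hfac1, pow_one, div_one] at hle
    rw [hfac2] at hle
    -- hle : δ/(1-δ) * (exp(-(cδ)) * (cδ)) ≤ exp(-(cδ)) * (cδ)^2 / 2
    have hδ' : (0:ℝ) < 1 - δ := by linarith
    have hE : (0:ℝ) < Real.exp (-(c * δ)) := Real.exp_pos _
    have hlam : (0:ℝ) < c * δ := by positivity
    have hid : (1-δ)*((δ/(1-δ)) * (Real.exp (-(c * δ)) * (c * δ)))
        = δ * (Real.exp (-(c * δ)) * (c * δ)) := by
      field_simp
    have hle2 := mul_le_mul_of_nonneg_left hle (le_of_lt hδ')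
    rw [hid] at hle2
    -- δ * (E * λ) ≤ (1-δ) * (E * λ^2/2) ≤ E * λ^2 / 2
    nlinarith [mul_pos hE hlam, sq_nonneg (c*δ), mul_pos hδ0 (mul_pos hE hlam)]
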